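/- Let G and H be finite graphs, v a vertex of G, and let G' be obtained from G by blowing up v into H, i.e., deleting v, adding a disjoint copy of H, and replacing each edge wv of G by an edge from w to some vertex of H. If both G and H are k-edge-connected, then G' is k-edge-connected. -/
import Mathlib


open Relation

/-- `D` is an orientation of the simple graph `G`: every arc is along an edge,
and every edge gets exactly one direction. -/
def IsOrientation {V : Type*} (G : SimpleGraph V) (D : V → V → Prop) : Prop :=
  (∀ a b, D a b → G.Adj a b) ∧ ∀ a b, G.Adj a b → (D a b ↔ ¬ D b a)

/-- The digraph given by the relation `D` is strongly connected. -/
def StrongConn {V : Type*} (D : V → V → Prop) : Prop :=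
  ∀ a b : V, ReflTransGen D a b

/-- `D - v` is strongly connected. -/
def StrongAvoid {V : Type*} (D : V → V → Prop) (v : V) : Prop :=
  ∀ a b : V, a ≠ v → b ≠ v →
    ReflTransGen (fun x y => D x y ∧ x ≠ v ∧ y ≠ v) a b

/-- `G` is `k`-edge-connected: every nonempty proper vertex set has at least
`k` boundary edges (each crossing edge counted once, ordered with first endpoint inside). -/
def EdgeConn {V : Type*} (G : SimpleGraph V) (k : ℕ) : Prop :=
  ∀ X : Set V, X.Nonempty → X ≠ Set.univ →
    k ≤ Nat.card {p : V × V // p.1 ∈ X ∧ p.2 ∉ X ∧ G.Adj p.1 p.2}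

/-- The digraph `D` is `k`-arc-connected: every nonempty proper vertex set has
at least `k` entering arcs. -/
def ArcConn {V : Type*} (D : V → V → Prop) (k : ℕ) : Prop :=
  ∀ X : Set V, X.Nonempty → X ≠ Set.univ →
    k ≤ Nat.card {p : V × V // D p.1 p.2 ∧ p.1 ∉ X ∧ p.2 ∈ X}

/-- `D` is 2-vertex-connected: at least 3 vertices, strongly connected, and
strongly connected after deleting any vertex. -/
def TwoVC {V : Type*} (D : V → V → Prop) : Prop :=
  3 ≤ Nat.card V ∧ StrongConn D ∧ ∀ v : V, StrongAvoid D v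

/-- Edge-connectivity of the sub-multigraph of a multigraph (edges `E` with
endpoints `ends`) induced on the vertex set `S`: `S` has at least two vertices and
every cut of the induced multigraph has at least `k` crossing edges. -/
def SEdgeConnOn {V E : Type*} (ends : E → Sym2 V) (S : Set V) (k : ℕ) : Prop :=
  2 ≤ Nat.card S ∧ ∀ X : Set V, (X ∩ S).Nonempty → ¬ S ⊆ X →
    k ≤ Nat.card {e : E // (∀ x ∈ ends e, x ∈ S) ∧
      ∃ a b, ends e = s(a, b) ∧ a ∈ X ∩ S ∧ b ∈ S \ X}

open Classical in
/-- Blowing up a vertex v of a k-edge-connected multigraph G into a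
k-edge-connected multigraph H yields a k-edge-connected multigraph. The new graph
has vertices ({u : V // u ≠ v}) ⊕ W; an edge of G whose endpoint is v is
reattached to the vertex (att e) of H. -/
theorem stmt_4 {V W EG EH : Type*} [Finite V] [Finite W] [Finite EG] [Finite EH]
    (endsG : EG → Sym2 V) (endsH : EH → Sym2 W) (v : V) (att : EG → W)
    (hloop : ∀ e : EG, endsG e ≠ s(v, v)) (k : ℕ)
    (hG : SEdgeConnOn endsG Set.univ k) (hH : SEdgeConnOn endsH Set.univ k) :
    SEdgeConnOn
      (Sum.elim
        (fun e : EG => (endsG e).map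
          (fun u : V => if h : u = v then Sum.inr (att e) else Sum.inl (⟨u, h⟩ : {u : V // u ≠ v})))
        (fun e : EH => (endsH e).map (Sum.inr : W → ({u : V // u ≠ v}) ⊕ W)))
      Set.univ k := by

  classical
  constructor
  · have h1 : Nat.card ↥(Set.univ : Set (({u : V // u ≠ v}) ⊕ W))
        = Nat.card (({u : V // u ≠ v}) ⊕ W) := Nat.card_congr (Equiv.Set.univ _)
    have h2 : Nat.card ↥(Set.univ : Set W) = Nat.card W := Nat.card_congr (Equiv.Set.univ _)
    have hW := hH.1
    rw [h2] at hW
    rw [h1, Nat.card_sum]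
    omega
  · intro X hX1 hX2
    by_cases hall : ∀ w : W, Sum.inr w ∈ X
    · -- all of W is inside X; use a cut of G containing v
      set Y : Set V := {u : V | ∀ h : u ≠ v, Sum.inl ⟨u, h⟩ ∈ X} with hY
      have hYne : (Y ∩ Set.univ).Nonempty := ⟨v, by simp [hY], trivial⟩
      have hYp : ¬ Set.univ ⊆ Y := by
        intro hsub
        apply hX2
        intro x _
        cases x with
        | inl u => exact hsub (Set.mem_univ u.1) u.2
        | inr w => exact hall w
      refine le_trans (hG.2 Y hYne hYp) (Nat.card_le_card_of_injective
        (fun p => ⟨Sum.inl p.1, ?_⟩) ?_)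
      · obtain ⟨_, a, b, hab, ha, hb⟩ := p.2
        have hbv : b ≠ v := by
          intro h; exact hb.2 (by simp [hY, h])
        refine ⟨fun x _ => trivial,
          (if h : a = v then Sum.inr (att p.1) else Sum.inl ⟨a, h⟩),
          (if h : b = v then Sum.inr (att p.1) else Sum.inl ⟨b, h⟩), ?_, ?_, ?_⟩
        · show Sym2.map _ (endsG p.1) = _
          rw [hab, Sym2.map_pair_eq]
        · constructor
          · by_cases hav : a = v
            · simp only [dif_pos hav]; exact hall _
            · simp only [dif_neg hav]; exact ha.1 hav
          · trivial
        · refine ⟨trivial, ?_⟩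
          simp only [dif_neg hbv]
          intro hmem
          exact hb.2 (fun h => by convert hmem)
      · intro p q h
        simp only [Subtype.mk.injEq, Sum.inl.injEq] at h
        exact Subtype.ext h
    · push_neg at hall
      by_cases hnone : ∀ w : W, Sum.inr w ∉ X
      · -- no vertex of W in X; use a cut of G avoiding v
        set Y : Set V := {u : V | ∃ h : u ≠ v, Sum.inl ⟨u, h⟩ ∈ X} with hY
        have hYne : (Y ∩ Set.univ).Nonempty := by
          obtain ⟨x, hx, -⟩ := hX1
          cases x with
          | inl u => exact ⟨u.1, ⟨u.2, by simpa using hx⟩, trivial⟩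
          | inr w => exact absurd hx (hnone w)
        have hYp : ¬ Set.univ ⊆ Y := by
          intro hsub
          obtain ⟨h, -⟩ := hsub (Set.mem_univ v)
          exact h rfl
        refine le_trans (hG.2 Y hYne hYp) (Nat.card_le_card_of_injective
          (fun p => ⟨Sum.inl p.1, ?_⟩) ?_)
        · obtain ⟨_, a, b, hab, ha, hb⟩ := p.2
          obtain ⟨hav, hax⟩ := ha.1
          refine ⟨fun x _ => trivial,
            (if h : a = v then Sum.inr (att p.1) else Sum.inl ⟨a, h⟩),
            (if h : b = v then Sum.inr (att p.1) else Sum.inl ⟨b, h⟩), ?_, ?_, ?_⟩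
          · show Sym2.map _ (endsG p.1) = _
            rw [hab, Sym2.map_pair_eq]
          · exact ⟨by simp only [dif_neg hav]; exact hax, trivial⟩
          · refine ⟨trivial, ?_⟩
            by_cases hbv : b = v
            · simp only [dif_pos hbv]; exact hnone _
            · simp only [dif_neg hbv]
              intro hmem
              exact hb.2 ⟨hbv, hmem⟩
        · intro p q h
          simp only [Subtype.mk.injEq, Sum.inl.injEq] at h
          exact Subtype.ext h
      · -- X cuts W nontrivially; use a cut of H
        push_neg at hnone
        set Z : Set W := {w : W | Sum.inr w ∈ X} with hZ
        have hZne : (Z ∩ Set.univ).Nonempty := by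
          obtain ⟨w, hw⟩ := hnone; exact ⟨w, hw, trivial⟩
        have hZp : ¬ Set.univ ⊆ Z := by
          intro hsub
          obtain ⟨w, hw⟩ := hall
          exact hw (hsub (Set.mem_univ w))
        refine le_trans (hH.2 Z hZne hZp) (Nat.card_le_card_of_injective
          (fun p => ⟨Sum.inr p.1, ?_⟩) ?_)
        · obtain ⟨_, a, b, hab, ha, hb⟩ := p.2
          refine ⟨fun x _ => trivial, Sum.inr a, Sum.inr b, ?_, ⟨ha.1, trivial⟩,
            trivial, hb.2⟩
          show Sym2.map _ (endsH p.1) = _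
          rw [hab, Sym2.map_pair_eq]
        · intro p q h
          simp only [Subtype.mk.injEq, Sum.inr.injEq] at h
          exact Subtype.ext h
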